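/- Let K be a field and q ∈ K an element that is not a root of unity. Let M be the C(q)-module with K-basis {v_n : n ∈ ℕ} ∪ {w_n : n ∈ ℕ} and action a·v_0 = 0, a·v_n = ((qⁿ−1)/(q−1))·v_{n−1} for n ≥ 1, b·v_n = v_{n+1}, a·w_n = qⁿ(w_n + w_{n+1}), b·w_n = (q^{−n}/(1−q))·w_n + (−1)ⁿ v_0. Then V = span_K{v_n : n ∈ ℕ} is a C(q)-submodule of M and V is a simple C(q)-module. -/

import Mathlib

noncomputable section

open FreeAlgebra

/-- Defining relation of the quantized Weyl algebra `C(q)`: `a * b = q • (b * a) + 1`,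
where `ι K 0` plays the role of `a` and `ι K 1` plays the role of `b`. -/
inductive QuantizedWeylRel (K : Type) [Field K] (q : K) :
    FreeAlgebra K (Fin 2) → FreeAlgebra K (Fin 2) → Prop
  | rel : QuantizedWeylRel K q (ι K (0 : Fin 2) * ι K (1 : Fin 2))
      (q • (ι K (1 : Fin 2) * ι K (0 : Fin 2)) + 1)

/-- The quantized Weyl algebra `C(q)`. -/
abbrev QuantizedWeyl (K : Type) [Field K] (q : K) : Type :=
  RingQuot (QuantizedWeylRel K q)

/-- The generator `a` of the quantized Weyl algebra. -/
def QuantizedWeyl.a (K : Type) [Field K] (q : K) : QuantizedWeyl K q :=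
  RingQuot.mkAlgHom K (QuantizedWeylRel K q) (ι K (0 : Fin 2))

/-- The generator `b` of the quantized Weyl algebra. -/
def QuantizedWeyl.b (K : Type) [Field K] (q : K) : QuantizedWeyl K q :=
  RingQuot.mkAlgHom K (QuantizedWeylRel K q) (ι K (1 : Fin 2))

/-- Let `M` be the `C(q)`-module (`q` not a root of unity) with `K`-basis
`{v_n} ∪ {w_n}` and action `a·v_0 = 0`, `a·v_n = ((qⁿ-1)/(q-1))·v_{n-1}`,
`b·v_n = v_{n+1}`, `a·w_n = qⁿ(w_n + w_{n+1})`, `b·w_n = (q⁻ⁿ/(1-q))·w_n + (-1)ⁿ·v_0`.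
Then the `K`-span `V` of `{v_n}` is a `C(q)`-submodule of `M` and is a simple
`C(q)`-module. -/
theorem quantizedWeyl_V_isSimple (K : Type) [Field K] (q : K) (hq0 : q ≠ 0)
    (hq : ∀ k : ℕ, 0 < k → q ^ k ≠ 1)
    (M : Type) [AddCommGroup M] [Module K M] [Module (QuantizedWeyl K q) M]
    [IsScalarTower K (QuantizedWeyl K q) M]
    (bas : Module.Basis (ℕ ⊕ ℕ) K M)
    (ha0 : QuantizedWeyl.a K q • bas (Sum.inl 0) = (0 : M))
    (hav : ∀ n : ℕ, QuantizedWeyl.a K q • bas (Sum.inl (n + 1)) =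
      ((q ^ (n + 1) - 1) / (q - 1)) • bas (Sum.inl n))
    (hbv : ∀ n : ℕ, QuantizedWeyl.b K q • bas (Sum.inl n) = bas (Sum.inl (n + 1)))
    (haw : ∀ n : ℕ, QuantizedWeyl.a K q • bas (Sum.inr n) =
      q ^ n • (bas (Sum.inr n) + bas (Sum.inr (n + 1))))
    (hbw : ∀ n : ℕ, QuantizedWeyl.b K q • bas (Sum.inr n) =
      ((q ^ n)⁻¹ / (1 - q)) • bas (Sum.inr n) + ((-1 : K) ^ n) • bas (Sum.inl 0))
    :
    ∃ V : Submodule (QuantizedWeyl K q) M,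
      (V : Set M) = (Submodule.span K (Set.range fun n : ℕ => bas (Sum.inl n)) :
        Submodule K M) ∧
      IsSimpleModule (QuantizedWeyl K q) V := by
  classical
  set A := QuantizedWeyl.a K q with hA'
  set B := QuantizedWeyl.b K q with hB'
  set v : ℕ → M := fun n => bas (Sum.inl n) with hv
  set V : Submodule K M := Submodule.span K (Set.range v) with hVdef
  have hq1 : q ≠ 1 := by simpa using hq 1 one_pos
  have hvV : ∀ n, v n ∈ V := fun n => Submodule.subset_span ⟨n, rfl⟩
  have smulc : ∀ (k : K) (r : QuantizedWeyl K q) (m : M), r • (k • m) = k • (r • m) := by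
    intro k r m
    rw [← algebraMap_smul (QuantizedWeyl K q) k m, ← mul_smul, ← Algebra.commutes, mul_smul,
      algebraMap_smul]
  -- closure of V under a given r, from the action on generators
  have clos : ∀ (r : QuantizedWeyl K q), (∀ n, r • v n ∈ V) → ∀ x ∈ V, r • x ∈ V := by
    intro r hr x hx
    induction hx using Submodule.span_induction with
    | mem x hx => obtain ⟨n, rfl⟩ := hx; exact hr n
    | zero => rw [smul_zero]; exact V.zero_mem
    | add x y _ _ ihx ihy => rw [smul_add]; exact V.add_mem ihx ihy
    | smul k x _ ih => rw [smulc]; exact V.smul_mem k ih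
  have hAcl : ∀ x ∈ V, A • x ∈ V := by
    apply clos; intro n
    cases n with
    | zero => rw [show v 0 = bas (Sum.inl 0) from rfl, ha0]; exact V.zero_mem
    | succ n =>
        rw [show v (n+1) = bas (Sum.inl (n+1)) from rfl, hav]
        exact V.smul_mem _ (hvV n)
  have hBcl : ∀ x ∈ V, B • x ∈ V := by
    apply clos; intro n
    rw [show v n = bas (Sum.inl n) from rfl, hbv]
    exact hvV (n+1)
  -- C(q) is generated by A and B over K
  have htop : Algebra.adjoin K ({A, B} : Set (QuantizedWeyl K q)) = ⊤ := by
    have h1 : Algebra.adjoin K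
        (Set.range (ι K : Fin 2 → FreeAlgebra K (Fin 2))) = ⊤ :=
      FreeAlgebra.adjoin_range_ι K (Fin 2)
    have himg : (RingQuot.mkAlgHom K (QuantizedWeylRel K q)) ''
        Set.range (ι K : Fin 2 → FreeAlgebra K (Fin 2)) = {A, B} := by
      rw [← Set.range_comp]
      ext x
      constructor
      · rintro ⟨i, rfl⟩
        fin_cases i
        · exact Or.inl rfl
        · exact Or.inr rfl
      · rintro (rfl | rfl)
        · exact ⟨0, rfl⟩
        · exact ⟨1, rfl⟩
    rw [← himg, ← AlgHom.map_adjoin, h1, Algebra.map_top,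
      (AlgHom.range_eq_top _).mpr (RingQuot.mkAlgHom_surjective K _)]
  have hact : ∀ (r : QuantizedWeyl K q), ∀ x ∈ V, r • x ∈ V := by
    intro r
    have hr : r ∈ Algebra.adjoin K ({A, B} : Set (QuantizedWeyl K q)) := by
      rw [htop]; exact Algebra.mem_top
    induction hr using Algebra.adjoin_induction with
    | mem s hs =>
        rcases hs with rfl | rfl
        · exact hAcl
        · exact hBcl
    | algebraMap k =>
        intro x hx
        rw [algebraMap_smul]
        exact V.smul_mem k hx
    | add r s _ _ ihr ihs =>
        intro x hx
        rw [add_smul]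
        exact V.add_mem (ihr x hx) (ihs x hx)
    | mul r s _ _ ihr ihs =>
        intro x hx
        rw [mul_smul]
        exact ihr _ (ihs x hx)
  -- the submodule V'
  refine ⟨{ carrier := V
            add_mem' := fun hx hy => V.add_mem hx hy
            zero_mem' := V.zero_mem
            smul_mem' := fun r {x} hx => hact r x hx }, rfl, ?_⟩
  set V' : Submodule (QuantizedWeyl K q) M :=
    { carrier := V
      add_mem' := fun hx hy => V.add_mem hx hy
      zero_mem' := V.zero_mem
      smul_mem' := fun r {x} hx => hact r x hx } with hV'
  have hmemV' : ∀ x : M, x ∈ V' ↔ x ∈ V := fun x => Iff.rfl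
  -- K-scalars preserve C(q)-submodules
  have Wsmul : ∀ (W : Submodule (QuantizedWeyl K q) M) (k : K) (y : M),
      y ∈ W → k • y ∈ W := by
    intro W k y hy
    rw [← algebraMap_smul (QuantizedWeyl K q) k y]
    exact W.smul_mem _ hy
  -- the key lowering lemma
  have key : ∀ (W : Submodule (QuantizedWeyl K q) M) (N : ℕ) (c : ℕ → K), c N ≠ 0 →
      (∑ n ∈ Finset.range (N+1), c n • v n) ∈ W → v 0 ∈ W := by
    intro W N
    induction N with
    | zero =>
        intro c hc hsum
        have : (c 0)⁻¹ • (c 0 • v 0) ∈ W := Wsmul W _ _ (by simpa using hsum)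
        rwa [smul_smul, inv_mul_cancel₀ hc, one_smul] at this
    | succ N ih =>
        intro c hc hsum
        have hstep : A • (∑ n ∈ Finset.range (N+2), c n • v n) =
            ∑ n ∈ Finset.range (N+1), (c (n+1) * ((q ^ (n+1) - 1) / (q - 1))) • v n := by
          rw [Finset.smul_sum, Finset.sum_range_succ']
          have h0 : A • (c 0 • v 0) = 0 := by
            rw [smulc, show v 0 = bas (Sum.inl 0) from rfl, ha0, smul_zero]
          rw [h0, add_zero]
          refine Finset.sum_congr rfl fun n _ => ?_
          rw [smulc, show v (n+1) = bas (Sum.inl (n+1)) from rfl, hav, smul_smul]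
        have hlam : (q ^ (N+1) - 1) / (q - 1) ≠ 0 :=
          div_ne_zero (sub_ne_zero.mpr (hq (N+1) (by omega)))
            (sub_ne_zero.mpr hq1)
        refine ih (fun n => c (n+1) * ((q ^ (n+1) - 1) / (q - 1))) ?_ ?_
        · exact mul_ne_zero hc hlam
        · rw [← hstep]; exact W.smul_mem A hsum
  -- all v n lie in any submodule containing v 0
  have hup : ∀ (W : Submodule (QuantizedWeyl K q) M), v 0 ∈ W → ∀ n, v n ∈ W := by
    intro W h0 n
    induction n with
    | zero => exact h0
    | succ n ihn =>
        have := W.smul_mem B ihn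
        rwa [show B • v n = v (n+1) from hbv n] at this
  rw [isSimpleModule_iff_isAtom]
  constructor
  · intro hbot
    have h0 : v 0 ∈ V' := hvV 0
    rw [hbot] at h0
    exact bas.ne_zero (Sum.inl 0) (by simpa using h0)
  · intro W hW
    by_contra hbot
    obtain ⟨x, hxW, hx0⟩ := Submodule.exists_mem_ne_zero_of_ne_bot hbot
    have hxV : x ∈ V := (hmemV' x).mp (le_of_lt hW hxW)
    rw [hVdef, Finsupp.mem_span_range_iff_exists_finsupp] at hxV
    obtain ⟨c, hcx⟩ := hxV
    have hcne : c ≠ 0 := by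
      rintro rfl
      simp at hcx
      exact hx0 hcx.symm
    have hsupp : c.support.Nonempty := Finsupp.support_nonempty_iff.mpr hcne
    set N := c.support.max' hsupp with hN
    have hcN : c N ≠ 0 := Finsupp.mem_support_iff.mp (c.support.max'_mem hsupp)
    have hsum : (∑ n ∈ Finset.range (N+1), c n • v n) = x := by
      rw [← hcx, Finsupp.sum]
      refine (Finset.sum_subset ?_ ?_).symm
      · intro n hn
        have := Finset.le_max' _ _ hn
        exact Finset.mem_range.mpr (by omega)
      · intro n _ hn
        rw [Finsupp.notMem_support_iff.mp hn, zero_smul]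
    have h0W : v 0 ∈ W := key W N c hcN (by rw [hsum]; exact hxW)
    have hVle : V' ≤ W := by
      intro y hy
      have : y ∈ Submodule.restrictScalars K W := by
        refine Submodule.span_le.mpr ?_ ((hmemV' y).mp hy)
        rintro z ⟨n, rfl⟩
        exact hup W h0W n
      exact this
    exact absurd (le_antisymm (le_of_lt hW) hVle) (ne_of_lt hW)


end
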